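/- The function Φ(t) = log det(Σ_{i=1}^n e^{t_i} x_i ⊗ x_i) is convex on R^n, provided x_1,...,x_n span R^d. -/

import Mathlib

open Matrix

open scoped Classical in
/-- Special case of the Cauchy–Binet formula:
`det (∑ i, c i • x i ⊗ x i) = ∑_{g strictly monotone} (∏ j, c (g j)) * (det [x (g a) b])²`. -/
private theorem stmt3_det_expand {d n : ℕ} (x : Fin n → Fin d → ℝ) (c : Fin n → ℝ) :
    (∑ i, c i • Matrix.vecMulVec (x i) (x i)).det
      = ∑ g ∈ Finset.univ.filter (fun g : Fin d → Fin n => StrictMono g),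
          (∏ j, c (g j)) * (Matrix.det (Matrix.of fun a b => x (g a) b)) ^ 2 := by
  classical
  set F : (Fin d → Fin n) → ℝ :=
    fun r => (∏ j, (c (r j) * x (r j) j)) * Matrix.det (Matrix.of fun a b => x (r a) b) with hF
  -- Step 1: multilinear expansion of the determinant in the rows.
  have h1 : (∑ i, c i • Matrix.vecMulVec (x i) (x i)).det = ∑ r : Fin d → Fin n, F r := by
    have hrow : (∑ i, c i • Matrix.vecMulVec (x i) (x i))
        = fun a => ∑ i, (c i * x i a) • x i := by
      funext a
      funext b
      simp [Matrix.sum_apply, Matrix.vecMulVec_apply, mul_assoc]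
    calc (∑ i, c i • Matrix.vecMulVec (x i) (x i)).det
        = (Matrix.detRowAlternating (n := Fin d) (R := ℝ)).toMultilinearMap
            (fun a => ∑ i, (c i * x i a) • x i) := by rw [← hrow]; rfl
      _ = ∑ r : Fin d → Fin n,
            (Matrix.detRowAlternating (n := Fin d) (R := ℝ)).toMultilinearMap
              (fun a => (c (r a) * x (r a) a) • x (r a)) :=
          MultilinearMap.map_sum _ _
      _ = ∑ r : Fin d → Fin n, F r := by
          refine Finset.sum_congr rfl fun r _ => ?_
          rw [MultilinearMap.map_smul_univ]
          rfl
  -- Step 2: non-injective terms vanish.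
  have h2 : ∑ r : Fin d → Fin n, F r
      = ∑ r ∈ Finset.univ.filter (fun r : Fin d → Fin n => Function.Injective r), F r := by
    refine (Finset.sum_subset (Finset.filter_subset _ _) ?_).symm
    intro r _ hr
    simp only [Finset.mem_filter, Finset.mem_univ, true_and] at hr
    rw [Function.Injective] at hr
    push_neg at hr
    obtain ⟨a, b, hab, hne⟩ := hr
    have hdet : Matrix.det (Matrix.of fun a b => x (r a) b) = 0 := by
      refine Matrix.det_zero_of_row_eq hne ?_
      funext j
      simp [hab]
    simp [hF, hdet]
  -- Step 3: group injective maps as (strictly monotone map) ∘ (permutation).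
  have h3 : ∑ r ∈ Finset.univ.filter (fun r : Fin d → Fin n => Function.Injective r), F r
      = ∑ p ∈ (Finset.univ.filter (fun g : Fin d → Fin n => StrictMono g)) ×ˢ
            (Finset.univ : Finset (Equiv.Perm (Fin d))), F (p.1 ∘ p.2) := by
    refine (Finset.sum_bij (fun p _ => p.1 ∘ p.2) ?_ ?_ ?_ ?_).symm
    · rintro ⟨g, σ⟩ hp
      simp only [Finset.mem_product, Finset.mem_filter, Finset.mem_univ, true_and,
        and_true] at hp
      simp only [Finset.mem_filter, Finset.mem_univ, true_and]
      exact hp.injective.comp σ.injective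
    · rintro ⟨g₁, σ₁⟩ hp₁ ⟨g₂, σ₂⟩ hp₂ h
      simp only [Finset.mem_product, Finset.mem_filter, Finset.mem_univ, true_and,
        and_true] at hp₁ hp₂
      have h' : g₁ ∘ σ₁ = g₂ ∘ σ₂ := h
      have hrange : Set.range g₁ = Set.range g₂ := by
        have e1 : Set.range (g₁ ∘ σ₁) = Set.range g₁ := σ₁.surjective.range_comp g₁
        have e2 : Set.range (g₂ ∘ σ₂) = Set.range g₂ := σ₂.surjective.range_comp g₂
        rw [← e1, ← e2, h']
      have hg : g₁ = g₂ := (@StrictMono.range_inj (Fin d) (Fin n) _ _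
          (inferInstance : WellFoundedLT (Fin d)) g₁ g₂ hp₁ hp₂).mp hrange
      subst hg
      have hσ : σ₁ = σ₂ := by
        ext a
        exact congrArg Fin.val (hp₁.injective (congrFun h' a))
      simp [hσ]
    · intro r hr
      simp only [Finset.mem_filter, Finset.mem_univ, true_and] at hr
      set s : Finset (Fin n) := Finset.image r Finset.univ with hs
      have hcard : s.card = d := by
        rw [hs, Finset.card_image_of_injective _ hr, Finset.card_univ, Fintype.card_fin]
      have hmem : ∀ a, r a ∈ s := fun a => Finset.mem_image_of_mem r (Finset.mem_univ a)
      set σ₀ : Fin d → Fin d := fun a => (s.orderIsoOfFin hcard).symm ⟨r a, hmem a⟩ with hσ₀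
      have hσinj : Function.Injective σ₀ := by
        intro a b hab
        apply hr
        have := (s.orderIsoOfFin hcard).symm.injective hab
        exact congrArg Subtype.val this
      refine ⟨⟨⇑(s.orderEmbOfFin hcard),
          Equiv.ofBijective σ₀ (Finite.injective_iff_bijective.mp hσinj)⟩, ?_, ?_⟩
      · simp only [Finset.mem_product, Finset.mem_filter, Finset.mem_univ, true_and, and_true]
        exact (s.orderEmbOfFin hcard).strictMono
      · funext a
        show s.orderEmbOfFin hcard (σ₀ a) = r a
        rw [← Finset.coe_orderIsoOfFin_apply, hσ₀, OrderIso.apply_symm_apply]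
    · intro p hp
      rfl
  -- Step 4: evaluate the inner sum over permutations.
  rw [h1, h2, h3, Finset.sum_product]
  refine Finset.sum_congr rfl fun g hg => ?_
  have key : ∀ σ : Equiv.Perm (Fin d), F (g ∘ σ)
      = (∏ j, c (g j)) * Matrix.det (Matrix.of fun a b => x (g a) b) *
        (((Equiv.Perm.sign σ : ℤ) : ℝ) * ∏ j, x (g (σ j)) j) := by
    intro σ
    have hperm : Matrix.det (Matrix.of fun a b => x (g (σ a)) b)
        = ((Equiv.Perm.sign σ : ℤ) : ℝ) * Matrix.det (Matrix.of fun a b => x (g a) b) := by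
      calc Matrix.det (Matrix.of fun a b => x (g (σ a)) b)
          = ((Matrix.of fun a b => x (g a) b).submatrix σ id).det := rfl
        _ = _ := by rw [Matrix.det_permute]
    have hc : (∏ j, c (g (σ j))) = ∏ j, c (g j) := Equiv.prod_comp σ (fun j => c (g j))
    calc F (g ∘ σ)
        = (∏ j, c (g (σ j))) * (∏ j, x (g (σ j)) j) *
            Matrix.det (Matrix.of fun a b => x (g (σ a)) b) := by
          rw [hF]
          simp only [Function.comp_apply]
          rw [Finset.prod_mul_distrib]
      _ = _ := by rw [hperm, hc]; ring
  calc ∑ σ : Equiv.Perm (Fin d), F (g ∘ σ)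
      = (∏ j, c (g j)) * Matrix.det (Matrix.of fun a b => x (g a) b) *
          ∑ σ : Equiv.Perm (Fin d), (((Equiv.Perm.sign σ : ℤ) : ℝ) * ∏ j, x (g (σ j)) j) := by
        rw [Finset.mul_sum]
        exact Finset.sum_congr rfl fun σ _ => key σ
    _ = (∏ j, c (g j)) * (Matrix.det (Matrix.of fun a b => x (g a) b)) ^ 2 := by
        have hdetsum : (∑ σ : Equiv.Perm (Fin d),
              (((Equiv.Perm.sign σ : ℤ) : ℝ) * ∏ j, x (g (σ j)) j))
            = Matrix.det (Matrix.of fun a b => x (g a) b) :=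
          (Matrix.det_apply' (Matrix.of fun a b => x (g a) b)).symm
        rw [hdetsum]
        ring

private theorem stmt3_sum_comm3 {α : Type*} [AddCommMonoid α] {d n : ℕ}
    (F : Fin d → Fin d → Fin n → α) :
    (∑ y : Fin d, ∑ z : Fin d, ∑ i : Fin n, F y z i)
      = ∑ i : Fin n, ∑ y : Fin d, ∑ z : Fin d, F y z i :=
  calc (∑ y : Fin d, ∑ z : Fin d, ∑ i : Fin n, F y z i)
      = ∑ y : Fin d, ∑ i : Fin n, ∑ z : Fin d, F y z i :=
        Finset.sum_congr rfl fun y _ => Finset.sum_comm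
    _ = ∑ i : Fin n, ∑ y : Fin d, ∑ z : Fin d, F y z i := Finset.sum_comm

/-- Quadratic form of the matrix `∑ i, c i • x i ⊗ x i`. -/
private theorem stmt3_quad {d n : ℕ} (x : Fin n → Fin d → ℝ) (c : Fin n → ℝ) (v : Fin d → ℝ) :
    dotProduct (star v) ((∑ i, c i • Matrix.vecMulVec (x i) (x i)) *ᵥ v)
        = ∑ i, c i * (dotProduct (x i) v) ^ 2 := by
  simp only [dotProduct, Matrix.mulVec, Matrix.sum_apply, Matrix.smul_apply,
    Matrix.vecMulVec_apply, smul_eq_mul, star_trivial, Pi.star_apply,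
    Finset.mul_sum, Finset.sum_mul]
  calc (∑ y : Fin d, ∑ z : Fin d, ∑ i : Fin n, v y * (c i * (x i y * x i z) * v z))
      = ∑ i : Fin n, ∑ y : Fin d, ∑ z : Fin d, v y * (c i * (x i y * x i z) * v z) :=
        stmt3_sum_comm3 _
    _ = ∑ i, c i * (∑ a, x i a * v a) ^ 2 := by
        refine Finset.sum_congr rfl fun i _ => ?_
        rw [sq, Finset.sum_mul_sum, Finset.mul_sum]
        refine Finset.sum_congr rfl fun y _ => ?_
        rw [Finset.mul_sum]
        refine Finset.sum_congr rfl fun z _ => by ring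

/-- Positivity of the determinant, from the spanning hypothesis. -/
private theorem stmt3_det_pos {d n : ℕ} (x : Fin n → Fin d → ℝ)
    (hspan : Submodule.span ℝ (Set.range x) = ⊤) (c : Fin n → ℝ) (hc : ∀ i, 0 < c i) :
    0 < (∑ i, c i • Matrix.vecMulVec (x i) (x i)).det := by
  classical
  apply Matrix.PosDef.det_pos
  refine Matrix.posDef_iff_dotProduct_mulVec.mpr ⟨?_, ?_⟩
  · show _ = _
    funext a b
    simp only [Matrix.conjTranspose_apply, Matrix.sum_apply, Matrix.smul_apply,
      Matrix.vecMulVec_apply, smul_eq_mul, star_trivial]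
    refine Finset.sum_congr rfl fun i _ => by ring
  · intro v hv
    rw [stmt3_quad x c v]
    have hexists : ∃ i, dotProduct (x i) v ≠ 0 := by
      by_contra h
      push_neg at h
      have hallspan : ∀ w ∈ Submodule.span ℝ (Set.range x), dotProduct w v = 0 := by
        intro w hw
        induction hw using Submodule.span_induction with
        | mem w hw => obtain ⟨i, rfl⟩ := hw; exact h i
        | zero => simp
        | add w₁ w₂ _ _ h₁ h₂ => rw [add_dotProduct, h₁, h₂, add_zero]
        | smul r w _ hw => rw [smul_dotProduct, hw, smul_zero]
      have hvv : dotProduct v v = 0 := hallspan v (by rw [hspan]; trivial)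
      exact hv (dotProduct_self_eq_zero.mp hvv)
    obtain ⟨i₀, hi₀⟩ := hexists
    refine Finset.sum_pos' (fun i _ => ?_) ⟨i₀, Finset.mem_univ i₀, ?_⟩
    · exact mul_nonneg (hc i).le (sq_nonneg _)
    · exact mul_pos (hc i₀) (sq_pos_iff.mpr hi₀)

/-- The function `Φ(t) = log det (∑ i, e^{t i} • x i ⊗ x i)` is convex on `ℝ^n`,
provided the `x i` span `ℝ^d`. -/
theorem stmt3 {d n : ℕ} (x : Fin n → Fin d → ℝ)
    (hspan : Submodule.span ℝ (Set.range x) = ⊤) :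
    ConvexOn ℝ (Set.univ : Set (Fin n → ℝ))
      (fun t => Real.log (∑ i, Real.exp (t i) • Matrix.vecMulVec (x i) (x i)).det) := by
  classical
  set S := Finset.univ.filter (fun g : Fin d → Fin n => StrictMono g) with hS
  set W : (Fin d → Fin n) → ℝ :=
    fun g => (Matrix.det (Matrix.of fun a b => x (g a) b)) ^ 2 with hW
  have hWnonneg : ∀ g, 0 ≤ W g := fun g => sq_nonneg _
  set P : (Fin n → ℝ) → ℝ := fun t => ∑ g ∈ S, W g * Real.exp (∑ j, t (g j)) with hP
  have hkey : ∀ t : Fin n → ℝ,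
      (∑ i, Real.exp (t i) • Matrix.vecMulVec (x i) (x i)).det = P t := by
    intro t
    rw [stmt3_det_expand x (fun i => Real.exp (t i))]
    refine Finset.sum_congr rfl fun g _ => ?_
    rw [← Real.exp_sum]; ring
  have hPpos : ∀ t : Fin n → ℝ, 0 < P t := by
    intro t
    rw [← hkey]
    exact stmt3_det_pos x hspan _ fun i => Real.exp_pos _
  refine ⟨convex_univ, ?_⟩
  intro t _ u _ a b ha hb hab
  simp only [smul_eq_mul, hkey]
  rcases eq_or_lt_of_le ha with ha0 | ha'
  · have hb1 : b = 1 := by linarith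
    subst hb1
    rw [← ha0]
    simp
  rcases eq_or_lt_of_le hb with hb0 | hb'
  · have ha1 : a = 1 := by linarith
    subst ha1
    rw [← hb0]
    simp
  -- main case: 0 < a, 0 < b
  have hmain : P (a • t + b • u) ≤ (P t) ^ a * (P u) ^ b := by
    have hconj : (1 / a).HolderConjugate (1 / b) := by
      refine ⟨?_, by positivity, by positivity⟩
      · rw [one_div, inv_inv, one_div, inv_inv, inv_one]; exact hab
    have hholder : ∑ g ∈ S, (W g * Real.exp (∑ j, t (g j))) ^ a *
          (W g * Real.exp (∑ j, u (g j))) ^ b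
        ≤ (∑ g ∈ S, |(W g * Real.exp (∑ j, t (g j))) ^ a| ^ (1 / a)) ^ (1 / (1 / a)) *
          (∑ g ∈ S, |(W g * Real.exp (∑ j, u (g j))) ^ b| ^ (1 / b)) ^ (1 / (1 / b)) :=
      Real.inner_le_Lp_mul_Lq S
        (fun g => (W g * Real.exp (∑ j, t (g j))) ^ a)
        (fun g => (W g * Real.exp (∑ j, u (g j))) ^ b) hconj
    have hterm : ∀ g : Fin d → Fin n,
        W g * Real.exp (∑ j, (a • t + b • u) (g j))
          = (W g * Real.exp (∑ j, t (g j))) ^ a * (W g * Real.exp (∑ j, u (g j))) ^ b := by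
      intro g
      have hsum : (∑ j, (a • t + b • u) (g j)) = a * (∑ j, t (g j)) + b * (∑ j, u (g j)) := by
        rw [Finset.mul_sum, Finset.mul_sum, ← Finset.sum_add_distrib]
        refine Finset.sum_congr rfl fun j _ => by simp [mul_comm]
      rw [Real.mul_rpow (hWnonneg g) (Real.exp_pos _).le,
        Real.mul_rpow (hWnonneg g) (Real.exp_pos _).le, ← Real.exp_mul, ← Real.exp_mul]
      have hWab : W g ^ a * W g ^ b = W g := by
        rw [← Real.rpow_add' (hWnonneg g) (by rw [hab]; norm_num), hab, Real.rpow_one]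
      calc W g * Real.exp (∑ j, (a • t + b • u) (g j))
          = W g * (Real.exp ((∑ j, t (g j)) * a) * Real.exp ((∑ j, u (g j)) * b)) := by
            rw [← Real.exp_add, hsum]; ring_nf
        _ = W g ^ a * Real.exp ((∑ j, t (g j)) * a) * (W g ^ b * Real.exp ((∑ j, u (g j)) * b)) := by
            conv_lhs => rw [← hWab]
            ring
    have habs : ∀ (s : Fin n → ℝ) (e : ℝ), e ≠ 0 →
        (∑ g ∈ S, |(W g * Real.exp (∑ j, s (g j))) ^ e| ^ (1 / e)) ^ (1 / (1 / e)) = P s ^ e := by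
      intro s e hne
      rw [one_div_one_div]
      congr 1
      refine Finset.sum_congr rfl fun g _ => ?_
      have h0 : (0:ℝ) ≤ W g * Real.exp (∑ j, s (g j)) :=
        mul_nonneg (hWnonneg g) (Real.exp_pos _).le
      rw [abs_of_nonneg (Real.rpow_nonneg h0 _), ← Real.rpow_mul h0,
        mul_one_div_cancel hne, Real.rpow_one]
    rw [habs t a ha'.ne', habs u b hb'.ne'] at hholder
    calc P (a • t + b • u)
        = ∑ g ∈ S, (W g * Real.exp (∑ j, t (g j))) ^ a *
            (W g * Real.exp (∑ j, u (g j))) ^ b := by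
          rw [hP]
          exact Finset.sum_congr rfl fun g _ => hterm g
      _ ≤ P t ^ a * P u ^ b := hholder
  calc Real.log (P (a • t + b • u)) ≤ Real.log ((P t) ^ a * (P u) ^ b) :=
        Real.log_le_log (hPpos _) hmain
    _ = a * Real.log (P t) + b * Real.log (P u) := by
        rw [Real.log_mul (Real.rpow_pos_of_pos (hPpos t) a).ne'
            (Real.rpow_pos_of_pos (hPpos u) b).ne',
          Real.log_rpow (hPpos t), Real.log_rpow (hPpos u)]
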